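/- If C is a PA with a reset letter #, and v is a weakly synchronizing infinite word for C such that every state other than q_f always shares its mass equally with a twin (so that at every time n, C^v_n(q) = C^v_n(q̂) for all q ≠ q_f along #-free-since-reset segments), then for every ε < 1/2 there exists a finite word w over Σ \ {#} with C^w_{|w|}(q_f) > 1 − ε when started from the initial distribution of C. -/
import Mathlib


open Filter Finset

/-- A probability distribution on a finite type. -/
def IsDist {Q : Type*} [Fintype Q] (d : Q → ℝ) : Prop :=
  (∀ q, 0 ≤ d q) ∧ ∑ q, d q = 1

/-- The norm of a distribution: its maximal value. -/
noncomputable def dnorm {Q : Type*} [Fintype Q] [Nonempty Q] (d : Q → ℝ) : ℝ :=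
  Finset.univ.sup' Finset.univ_nonempty d

/-- A probabilistic automaton over states `Q` and alphabet `A`. -/
structure PA (Q : Type*) (A : Type*) [Fintype Q] where
  init : Q → ℝ
  init_dist : IsDist init
  trans : Q → A → Q → ℝ
  trans_dist : ∀ q σ, IsDist (trans q σ)

variable {Q A : Type*} [Fintype Q]

/-- One transition step applied to a distribution. -/
def PAstep (M : PA Q A) (d : Q → ℝ) (σ : A) : Q → ℝ :=
  fun q => ∑ q', d q' * M.trans q' σ q

/-- Computation of a PA on a finite word, starting from distribution `μ`. -/
def PArun (M : PA Q A) (μ : Q → ℝ) (w : List A) : Q → ℝ :=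
  w.foldl (PAstep M) μ

/-- Outcome of a PA on an infinite word, started from `μ`. -/
def PAoutcomeFrom (M : PA Q A) (μ : Q → ℝ) (w : ℕ → A) : ℕ → Q → ℝ
  | 0 => μ
  | n + 1 => PAstep M (PAoutcomeFrom M μ w n) (w n)

/-- Outcome of a PA on an infinite word from the initial distribution. -/
def PAoutcome (M : PA Q A) (w : ℕ → A) : ℕ → Q → ℝ :=
  PAoutcomeFrom M M.init w

lemma isDist_step {Q A : Type*} [Fintype Q] (M : PA Q A) {d : Q → ℝ}
    (hd : IsDist d) (σ : A) : IsDist (PAstep M d σ) := by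
  constructor
  · intro q
    exact Finset.sum_nonneg fun q' _ =>
      mul_nonneg (hd.1 q') ((M.trans_dist q' σ).1 q)
  · rw [show ∑ q, PAstep M d σ q = ∑ q, ∑ q', d q' * M.trans q' σ q from rfl,
      Finset.sum_comm]
    have : ∀ q' : Q, ∑ q, d q' * M.trans q' σ q = d q' := by
      intro q'
      rw [← Finset.mul_sum, (M.trans_dist q' σ).2, mul_one]
    simp only [this]
    exact hd.2

lemma isDist_run {Q A : Type*} [Fintype Q] (M : PA Q A) {μ : Q → ℝ}
    (hμ : IsDist μ) (w : List A) : IsDist (PArun M μ w) := by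
  induction w generalizing μ with
  | nil => exact hμ
  | cons a w ih => exact ih (isDist_step M hμ a)

lemma isDist_outcome {Q A : Type*} [Fintype Q] (M : PA Q A) (w : ℕ → A) (n : ℕ) :
    IsDist (PAoutcome M w n) := by
  induction n with
  | zero => exact M.init_dist
  | succ n ih => exact isDist_step M ih (w n)

lemma PArun_append {Q A : Type*} [Fintype Q] (M : PA Q A) (μ : Q → ℝ)
    (u : List A) (σ : A) : PArun M μ (u ++ [σ]) = PAstep M (PArun M μ u) σ := by
  simp [PArun, List.foldl_append]

/-- If `C` has a reset letter `#`, its non-`q_f` states come in twin pairs that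
    always share their mass equally along `#`-free words, and `v` is weakly
    synchronizing for `C`, then for every `0 < ε < 1/2` there is a `#`-free
    finite word `w` with `C^w_{|w|}(q_f) > 1 - ε` from the initial
    distribution. -/
theorem stmt_13 {Q₀ A : Type*} [Fintype Q₀]
    (C : PA (Option (Q₀ × Bool)) A) (hash : A)
    (hreset : ∀ q, C.trans q hash = C.init)
    (htwin : ∀ u : List A, hash ∉ u → ∀ (q : Q₀) (b : Bool),
      PArun C C.init u (some (q, b)) = PArun C C.init u (some (q, !b)))
    (v : ℕ → A)
    (hv : Filter.limsup (fun n => dnorm (PAoutcome C v n)) Filter.atTop = 1) :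
    ∀ ε : ℝ, 0 < ε → ε < 1 / 2 →
      ∃ w : List A, hash ∉ w ∧ PArun C C.init w none > 1 - ε := by
  intro ε hε hε2
  -- every outcome equals a run on a hash-free word
  have hstephash : ∀ d : Option (Q₀ × Bool) → ℝ, IsDist d →
      PAstep C d hash = C.init := by
    intro d hd
    funext q
    show ∑ q', d q' * C.trans q' hash q = C.init q
    have : ∀ q', d q' * C.trans q' hash q = d q' * C.init q := by
      intro q'; rw [hreset q']
    simp only [this, ← Finset.sum_mul, hd.2, one_mul]
  have hexists : ∀ n, ∃ u : List A, hash ∉ u ∧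
      PAoutcome C v n = PArun C C.init u := by
    intro n
    induction n with
    | zero => exact ⟨[], by simp, rfl⟩
    | succ n ih =>
      obtain ⟨u, hu, heq⟩ := ih
      by_cases h : v n = hash
      · refine ⟨[], by simp, ?_⟩
        show PAstep C (PAoutcome C v n) (v n) = _
        rw [h, hstephash _ (isDist_outcome C v n)]
        rfl
      · refine ⟨u ++ [v n], ?_, ?_⟩
        · simp only [List.mem_append, List.mem_singleton]
          rintro (h1 | h1)
          · exact hu h1
          · exact h h1.symm
        · show PAstep C (PAoutcome C v n) (v n) = _
          rw [heq, PArun_append]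
  -- nonneg and cobounded
  have hnn : ∀ n, (0:ℝ) ≤ dnorm (PAoutcome C v n) := by
    intro n
    obtain ⟨q⟩ := (inferInstance : Nonempty (Option (Q₀ × Bool)))
    exact le_trans ((isDist_outcome C v n).1 q)
      (Finset.le_sup' _ (Finset.mem_univ q))
  have hcb : Filter.IsCoboundedUnder (· ≤ ·)
      Filter.atTop (fun n => dnorm (PAoutcome C v n)) := by
    apply Filter.IsBoundedUnder.isCoboundedUnder_le
    exact ⟨0, Filter.eventually_map.2 (Filter.Eventually.of_forall hnn)⟩
  have hlt : (1 - ε : ℝ) < Filter.limsup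
      (fun n => dnorm (PAoutcome C v n)) Filter.atTop := by
    rw [hv]; linarith
  obtain ⟨n, hn⟩ := (Filter.frequently_lt_of_lt_limsup hcb hlt).exists
  obtain ⟨u, hu, heq⟩ := hexists n
  -- find the maximizing state
  obtain ⟨q, -, hq⟩ := Finset.exists_mem_eq_sup' Finset.univ_nonempty
    (PAoutcome C v n)
  rw [dnorm, hq] at hn
  match q with
  | none =>
    exact ⟨u, hu, by rw [← heq]; exact hn⟩
  | some (q₀, b) =>
    -- contradiction: twinned mass ≤ 1/2
    exfalso
    classical
    have hd := isDist_run C C.init_dist u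
    have htw := htwin u hu q₀ b
    have hsub : ∑ x ∈ ({some (q₀, b), some (q₀, !b)} :
        Finset (Option (Q₀ × Bool))), PArun C C.init u x ≤ 1 := by
      rw [← hd.2]
      exact Finset.sum_le_sum_of_subset_of_nonneg (Finset.subset_univ _)
        (fun x _ _ => hd.1 x)
    have hne : (some (q₀, b) : Option (Q₀ × Bool)) ≠ some (q₀, !b) := by
      simp [Bool.eq_not_self]
    rw [Finset.sum_pair hne, ← htw] at hsub
    rw [heq] at hn
    linarith
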